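/- Let γ : A → A be a unital Schwarz contraction on a finite-dimensional C*-algebra, and suppose there is a faithful (strictly positive) linear functional α with α ∘ γ = α. Then the fixed-point set Fix(γ) = {X : γ(X) = X} is a C*-subalgebra of A, and γ restricted to Fix(γ) acts as a *-algebra homomorphism. -/

import Mathlib

open Matrix ComplexOrder

open scoped MatrixOrder in
private lemma psd_trace_zero' {n : ℕ} {M : Matrix (Fin n) (Fin n) ℂ} (h : M.PosSemidef)
    (ht : M.trace = 0) : M = 0 := by
  obtain ⟨B, rfl⟩ := (CStarAlgebra.nonneg_iff_eq_star_mul_self.mp h.nonneg :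
    ∃ B : Matrix (Fin n) (Fin n) ℂ, M = Bᴴ * B)
  suffices hB : B = 0 by simp [hB]
  have h1 : ∑ i, ∑ k, Complex.normSq (B k i) = 0 := by
    have := congrArg Complex.re ht
    simpa [Matrix.trace, Matrix.diag, Matrix.mul_apply, Matrix.conjTranspose_apply,
      Complex.re_sum, Complex.normSq_eq_conj_mul_self, Complex.normSq_apply] using this
  ext k i
  have h2 : ∀ i ∈ (Finset.univ : Finset (Fin n)), ∑ k, Complex.normSq (B k i) = 0 := by
    rw [← Finset.sum_eq_zero_iff_of_nonneg]
    · exact h1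
    · exact fun i _ => Finset.sum_nonneg fun k _ => Complex.normSq_nonneg _
  have h3 := (Finset.sum_eq_zero_iff_of_nonneg
    (fun k _ => Complex.normSq_nonneg (B k i))).mp (h2 i (Finset.mem_univ i)) k
    (Finset.mem_univ k)
  simpa using Complex.normSq_eq_zero.mp h3

open scoped MatrixOrder in
private lemma faithful' {n : ℕ} {A D : Matrix (Fin n) (Fin n) ℂ} (hA : A.PosDef)
    (hD : D.PosSemidef) (ht : (A * D).trace = 0) : D = 0 := by
  set S := CFC.sqrt A with hS
  have hSH : S.IsHermitian := (CFC.sqrt_nonneg A).posSemidef.1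
  have hSS : S * S = A := CFC.sqrt_mul_sqrt_self A hA.posSemidef.nonneg
  have hM : (S * D * S).PosSemidef := by
    have := hD.mul_mul_conjTranspose_same S
    rwa [hSH.eq] at this
  have htr : (S * D * S).trace = 0 := by
    rw [Matrix.trace_mul_cycle, hSS, ht]
  have hM0 : S * D * S = 0 := psd_trace_zero' hM htr
  have hSunit : IsUnit S.det := by
    have h4 : IsUnit (S * S).det := hSS ▸ hA.isUnit.map Matrix.detMonoidHom
    rw [Matrix.det_mul] at h4
    exact isUnit_of_mul_isUnit_left h4
  have e : S⁻¹ * (S * D * S) * S⁻¹ = D := by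
    rw [Matrix.mul_assoc S D S, ← Matrix.mul_assoc S⁻¹ S, Matrix.nonsing_inv_mul _ hSunit,
      Matrix.one_mul, Matrix.mul_assoc D S, Matrix.mul_nonsing_inv _ hSunit, Matrix.mul_one]
  rw [← e, hM0]
  simp

private lemma polar_identity {n : ℕ} (X Y : Matrix (Fin n) (Fin n) ℂ) :
    Xᴴ * Y = (1/4 : ℂ) • ((X+Y)ᴴ*(X+Y) - (X-Y)ᴴ*(X-Y)
      - Complex.I • ((X+Complex.I•Y)ᴴ*(X+Complex.I•Y))
      + Complex.I • ((X-Complex.I•Y)ᴴ*(X-Complex.I•Y))) := by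
  simp only [conjTranspose_add, conjTranspose_sub, conjTranspose_smul, Complex.star_def,
    Complex.conj_I, add_mul, sub_mul, mul_add, mul_sub, smul_mul_assoc, mul_smul_comm,
    smul_smul, smul_add, smul_sub, neg_smul, neg_mul, smul_neg, sub_neg_eq_add]
  match_scalars <;> (ring_nf; try simp [Complex.I_sq])
  all_goals ring_nf

/-- **Fixed points of a Schwarz contraction with a faithful invariant functional.** If
`γ` is a unital Schwarz contraction on a matrix algebra and there is a faithful positive
linear functional `α(X) = Tr(A X)` (with `A` positive definite) satisfying `α ∘ γ = α`,
then the fixed-point set `Fix(γ)` is a C*-subalgebra (it contains the unit and is closed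
under addition, scalar multiplication, adjoints and products), and `γ` acts on it as a
*-algebra homomorphism. -/
theorem fixed_points_csubalgebra {n : ℕ}
    (γ : Matrix (Fin n) (Fin n) ℂ →ₗ[ℂ] Matrix (Fin n) (Fin n) ℂ)
    (hunital : γ 1 = 1)
    (hschwarz : ∀ X : Matrix (Fin n) (Fin n) ℂ, (γ (Xᴴ * X) - (γ X)ᴴ * γ X).PosSemidef)
    (A : Matrix (Fin n) (Fin n) ℂ) (hA : A.PosDef)
    (hinv : ∀ X : Matrix (Fin n) (Fin n) ℂ, (A * γ X).trace = (A * X).trace) :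
    (∀ X Y : Matrix (Fin n) (Fin n) ℂ, ∀ a : ℂ, γ X = X → γ Y = Y →
      γ (X + Y) = X + Y ∧ γ (a • X) = a • X ∧ γ Xᴴ = Xᴴ ∧ γ (X * Y) = X * Y) ∧
    (∀ X Y : Matrix (Fin n) (Fin n) ℂ, γ X = X → γ Y = Y →
      γ (X * Y) = γ X * γ Y ∧ γ Xᴴ = (γ X)ᴴ) := by
  -- key step: if X is fixed then Xᴴ * X is fixed
  have key : ∀ X : Matrix (Fin n) (Fin n) ℂ, γ X = X → γ (Xᴴ * X) = Xᴴ * X := by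
    intro X hX
    have hD := hschwarz X
    rw [hX] at hD
    have ht : (A * (γ (Xᴴ * X) - Xᴴ * X)).trace = 0 := by
      rw [Matrix.mul_sub, Matrix.trace_sub, hinv (Xᴴ * X), sub_self]
    have h0 := faithful' hA hD ht
    rw [sub_eq_zero] at h0
    exact h0
  -- by polarization, if X and Y are fixed then Xᴴ * Y is fixed
  have keymul : ∀ X Y : Matrix (Fin n) (Fin n) ℂ, γ X = X → γ Y = Y →
      γ (Xᴴ * Y) = Xᴴ * Y := by
    intro X Y hX hY
    have h1 := key (X + Y) (by rw [map_add, hX, hY])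
    have h2 := key (X - Y) (by rw [map_sub, hX, hY])
    have h3 := key (X + Complex.I • Y) (by rw [map_add, _root_.map_smul, hX, hY])
    have h4 := key (X - Complex.I • Y) (by rw [map_sub, _root_.map_smul, hX, hY])
    rw [polar_identity X Y, _root_.map_smul, map_add, map_sub, map_sub, _root_.map_smul, _root_.map_smul,
      h1, h2, h3, h4]
  -- fixed points are closed under adjoints
  have keystar : ∀ X : Matrix (Fin n) (Fin n) ℂ, γ X = X → γ Xᴴ = Xᴴ := by
    intro X hX
    have := keymul X 1 hX hunital
    rw [Matrix.mul_one] at this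
    exact this
  constructor
  · intro X Y a hX hY
    refine ⟨by rw [map_add, hX, hY], by rw [_root_.map_smul, hX], keystar X hX, ?_⟩
    have := keymul Xᴴ Y (keystar X hX) hY
    rwa [Matrix.conjTranspose_conjTranspose] at this
  · intro X Y hX hY
    constructor
    · rw [hX, hY]
      have := keymul Xᴴ Y (keystar X hX) hY
      rwa [Matrix.conjTranspose_conjTranspose] at this
    · rw [hX, keystar X hX]
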